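/- Let Y be an integrable real random variable and p : ℝ → [0,1] a Borel function that is weakly increasing on ℝ. Suppose p(Y) is not almost surely constant, i.e., P(p(Y) = c) < 1 for every constant c. Then Cov(Y, p(Y)) = E[Y·p(Y)] − E[Y]·E[p(Y)] > 0. -/
import Mathlib


open MeasureTheory Set

/-- If `p : ℝ → [0,1]` is weakly increasing and `p(Y)` is not almost
surely constant, then `Cov(Y, p(Y)) = E[Y p(Y)] − E[Y] E[p(Y)] > 0`. -/
theorem stmt_5 {Ω : Type*} [MeasurableSpace Ω] (P : Measure Ω) [IsProbabilityMeasure P]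
    (Y : Ω → ℝ) (hY : Measurable Y) (hint : Integrable Y P)
    (p : ℝ → ℝ) (hpmeas : Measurable p) (hp01 : ∀ y, p y ∈ Set.Icc (0 : ℝ) 1)
    (hmono : Monotone p)
    (hnotconst : ∀ c : ℝ, P {ω | p (Y ω) = c} < 1) :
    0 < (∫ ω, Y ω * p (Y ω) ∂P) - (∫ ω, Y ω ∂P) * (∫ ω, p (Y ω) ∂P) := by
  classical
  set μ := P.prod P with hμ
  have hq : Measurable fun ω => p (Y ω) := hpmeas.comp hY
  -- p(Y) is integrable (bounded on a probability space)
  have hq_int : Integrable (fun ω => p (Y ω)) P := by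
    refine (integrable_const (1 : ℝ)).mono' hq.aestronglyMeasurable ?_
    filter_upwards with ω
    have h := hp01 (Y ω)
    rw [Real.norm_eq_abs, abs_le]
    constructor <;> linarith [h.1, h.2]
  -- Y * p(Y) is integrable
  have hYq_int : Integrable (fun ω => Y ω * p (Y ω)) P := by
    refine hint.bdd_mul (c := 1) hq.aestronglyMeasurable ?_ |>.congr ?_
    · filter_upwards with ω
      have h := hp01 (Y ω)
      rw [Real.norm_eq_abs, abs_le]; constructor <;> linarith [h.1, h.2]
    · filter_upwards with ω; ring
  -- the key function on the product space
  set g : Ω × Ω → ℝ := fun z => (Y z.1 - Y z.2) * (p (Y z.1) - p (Y z.2)) with hg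
  have hg_nonneg : ∀ z, 0 ≤ g z := by
    intro z
    rcases le_total (Y z.1) (Y z.2) with h | h
    · show 0 ≤ (Y z.1 - Y z.2) * (p (Y z.1) - p (Y z.2))
      nlinarith [hmono h]
    · exact mul_nonneg (by linarith) (by linarith [hmono h])
  have hg_pos : ∀ z : Ω × Ω, p (Y z.1) ≠ p (Y z.2) → 0 < g z := by
    intro z hne
    rcases lt_trichotomy (p (Y z.1)) (p (Y z.2)) with h | h | h
    · have hab : Y z.1 < Y z.2 := by
        by_contra hc
        exact absurd (hmono (le_of_not_gt hc)) (by linarith)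
      exact mul_pos_of_neg_of_neg (by linarith) (by linarith)
    · exact absurd h hne
    · have hab : Y z.2 < Y z.1 := by
        by_contra hc
        exact absurd (hmono (le_of_not_gt hc)) (by linarith)
      exact mul_pos (by linarith) (by linarith)
  -- integrability of the pieces and of g
  have h1 : Integrable (fun z : Ω × Ω => Y z.1 * p (Y z.1)) μ := by
    simpa using hYq_int.mul_prod (integrable_const (1 : ℝ))
  have h2 : Integrable (fun z : Ω × Ω => Y z.1 * p (Y z.2)) μ :=
    hint.mul_prod hq_int
  have h3 : Integrable (fun z : Ω × Ω => p (Y z.1) * Y z.2) μ :=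
    hq_int.mul_prod hint
  have h4 : Integrable (fun z : Ω × Ω => Y z.2 * p (Y z.2)) μ := by
    simpa using (integrable_const (1 : ℝ)).mul_prod hYq_int
  have hg_eq : g = fun z : Ω × Ω =>
      (Y z.1 * p (Y z.1) - Y z.1 * p (Y z.2) - p (Y z.1) * Y z.2) + Y z.2 * p (Y z.2) := by
    funext z; simp only [hg]; ring
  have hg_int : Integrable g μ := by
    rw [hg_eq]; exact ((h1.sub h2).sub h3).add h4
  -- the value of ∫ g
  set A : ℝ := ∫ ω, Y ω * p (Y ω) ∂P with hA
  set EY : ℝ := ∫ ω, Y ω ∂P with hEY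
  set Eq : ℝ := ∫ ω, p (Y ω) ∂P with hEq
  have i1 : ∫ z, Y z.1 * p (Y z.1) ∂μ = A := by
    simpa using integral_prod_mul (μ := P) (ν := P) (fun ω => Y ω * p (Y ω)) (fun _ => (1 : ℝ))
  have i2 : ∫ z, Y z.1 * p (Y z.2) ∂μ = EY * Eq :=
    integral_prod_mul (μ := P) (ν := P) Y (fun ω => p (Y ω))
  have i3 : ∫ z, p (Y z.1) * Y z.2 ∂μ = Eq * EY :=
    integral_prod_mul (μ := P) (ν := P) (fun ω => p (Y ω)) Y
  have i4 : ∫ z, Y z.2 * p (Y z.2) ∂μ = A := by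
    simpa using integral_prod_mul (μ := P) (ν := P) (fun _ => (1 : ℝ)) (fun ω => Y ω * p (Y ω))
  have h12 : Integrable (fun z : Ω × Ω => Y z.1 * p (Y z.1) - Y z.1 * p (Y z.2)) μ := h1.sub h2
  have h123 : Integrable
      (fun z : Ω × Ω => Y z.1 * p (Y z.1) - Y z.1 * p (Y z.2) - p (Y z.1) * Y z.2) μ := h12.sub h3
  have hint_g : ∫ z, g z ∂μ = 2 * (A - EY * Eq) := by
    rw [hg_eq, integral_add h123 h4, integral_sub h12 h3, integral_sub h1 h2, i1, i2, i3, i4]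
    ring
  -- ∫ g ≥ 0
  have hnn : 0 ≤ ∫ z, g z ∂μ := integral_nonneg hg_nonneg
  -- strictness
  by_contra hcon
  push_neg at hcon
  have hD0 : A - EY * Eq = 0 := le_antisymm hcon (by nlinarith [hint_g, hnn])
  have hzero : ∫ z, g z ∂μ = 0 := by rw [hint_g, hD0]; ring
  have hg_ae : g =ᵐ[μ] 0 :=
    (integral_eq_zero_iff_of_nonneg hg_nonneg hg_int).mp hzero
  -- the set where p(Y·) differs has product measure zero
  set S : Set (Ω × Ω) := {z | p (Y z.1) ≠ p (Y z.2)} with hS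
  have hSmeas : MeasurableSet S :=
    (measurableSet_eq_fun (hq.comp measurable_fst) (hq.comp measurable_snd)).compl
  have hSnull : μ S = 0 := by
    have hsub : S ⊆ {z | g z ≠ 0} := fun z hz => ne_of_gt (hg_pos z hz)
    have : μ {z | g z ≠ 0} = 0 := by
      have := hg_ae
      rw [Filter.EventuallyEq, ae_iff] at this
      simpa using this
    exact measure_mono_null hsub this
  rw [hμ, Measure.measure_prod_null hSmeas] at hSnull
  -- pick a point ω in the a.e. set
  have hae : ∀ᵐ ω ∂P, P (Prod.mk ω ⁻¹' S) = 0 := by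
    filter_upwards [hSnull] with ω h using h
  obtain ⟨ω₀, hω₀⟩ := hae.exists
  -- then p(Y) = p(Y ω₀) a.s., contradicting hnotconst
  have hpre : Prod.mk ω₀ ⁻¹' S = {ω' | p (Y ω₀) ≠ p (Y ω')} := rfl
  have hmeq : MeasurableSet {ω' | p (Y ω') = p (Y ω₀)} :=
    measurableSet_eq_fun hq measurable_const
  have hone : P {ω' | p (Y ω') = p (Y ω₀)} = 1 := by
    have hcompl : P {ω' | p (Y ω') = p (Y ω₀)}ᶜ = 0 := by
      rw [hpre] at hω₀
      refine measure_mono_null ?_ hω₀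
      intro ω' h
      simp only [Set.mem_compl_iff, Set.mem_setOf_eq] at h ⊢
      exact fun he => h he.symm
    have := measure_add_measure_compl (μ := P) hmeq
    rw [hcompl, add_zero] at this
    simpa using this
  exact absurd hone (ne_of_lt (hnotconst (p (Y ω₀))))
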